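/- For n > 3 and positive reals ℓ₁ ≤ ⋯ ≤ ℓ_{n-1}, if the set {n−3, n−2} is long with respect to ℓ (i.e. ℓ_{n-3} + ℓ_{n-2} > (1/2)∑_{i=1}^n ℓᵢ), then d_{n-3}(ℓ) = 1, i.e. there is exactly one (n−2)-element subset of {1,…,n} containing both n−1 and n that is short with respect to ℓ, namely the complement of {n−3, n−2}. -/

import Mathlib

lemma stmt6_aux {n : ℕ} {ℓ : Fin n → ℝ} {J : Finset (Fin n)} {c d e : Fin n}
    (hpos : ∀ i, 0 < ℓ i)
    (hc : c ∈ J) (hd : d ∈ J) (he : e ∈ J) (hcd : c ≠ d) (hce : c ≠ e) (hde : d ≠ e) :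
    ℓ c + ℓ d + ℓ e ≤ ∑ i ∈ J, ℓ i := by
  have hsub : ({c, d, e} : Finset (Fin n)) ⊆ J := by
    intro x hx
    simp only [Finset.mem_insert, Finset.mem_singleton] at hx
    rcases hx with h|h|h <;> subst h <;> assumption
  calc ℓ c + ℓ d + ℓ e = ∑ i ∈ ({c, d, e} : Finset (Fin n)), ℓ i := by
        rw [Finset.sum_insert (by simp [hcd, hce]), Finset.sum_pair hde]; ring
    _ ≤ ∑ i ∈ J, ℓ i :=
        Finset.sum_le_sum_of_subset_of_nonneg hsub (fun i _ _ => (hpos i).le)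

lemma stmt6_main {n : ℕ} (hn : 3 < n) (ℓ : Fin n → ℝ) (hpos : ∀ i, 0 < ℓ i)
    (hmono : ∀ i j : Fin n, (i : ℕ) ≤ (j : ℕ) → (j : ℕ) < n - 1 → ℓ i ≤ ℓ j)
    (p4 p3 p2 p1 : Fin n)
    (v4 : (p4 : ℕ) = n - 4) (v3 : (p3 : ℕ) = n - 3)
    (v2 : (p2 : ℕ) = n - 2) (v1 : (p1 : ℕ) = n - 1)
    (hlong : (1 / 2) * ∑ i, ℓ i < ℓ p4 + ℓ p3) :
    {J : Finset (Fin n) | J.card = n - 2 ∧ p2 ∈ J ∧ p1 ∈ J ∧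
        ∑ i ∈ J, ℓ i < ∑ i ∈ Jᶜ, ℓ i}
      = {({p4, p3} : Finset (Fin n))ᶜ} := by
  have h43 : p4 ≠ p3 := by simp [Fin.ext_iff, v4, v3]; omega
  have h42 : p4 ≠ p2 := by simp [Fin.ext_iff, v4, v2]; omega
  have h41 : p4 ≠ p1 := by simp [Fin.ext_iff, v4, v1]; omega
  have h32 : p3 ≠ p2 := by simp [Fin.ext_iff, v3, v2]; omega
  have h31 : p3 ≠ p1 := by simp [Fin.ext_iff, v3, v1]; omega
  have h21 : p2 ≠ p1 := by simp [Fin.ext_iff, v2, v1]; omega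
  ext J
  simp only [Set.mem_setOf_eq, Set.mem_singleton_iff]
  constructor
  · rintro ⟨hcard, h2, h1, hshort⟩
    have hcc : Jᶜ.card = 2 := by
      rw [Finset.card_compl, hcard, Fintype.card_fin]; omega
    obtain ⟨a, b, hab, hJc⟩ := Finset.card_eq_two.mp hcc
    have ha : a ∉ J := by
      have : a ∈ Jᶜ := by rw [hJc]; simp
      exact Finset.mem_compl.mp this
    have hb : b ∉ J := by
      have : b ∈ Jᶜ := by rw [hJc]; simp
      exact Finset.mem_compl.mp this
    have hav : (a : ℕ) ≤ n - 3 := by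
      have h1' : a ≠ p2 := fun h => ha (h ▸ h2)
      have h2' : a ≠ p1 := fun h => ha (h ▸ h1)
      have := a.isLt
      simp only [ne_eq, Fin.ext_iff, v2, v1] at h1' h2'
      omega
    have hbv : (b : ℕ) ≤ n - 3 := by
      have h1' : b ≠ p2 := fun h => hb (h ▸ h2)
      have h2' : b ≠ p1 := fun h => hb (h ▸ h1)
      have := b.isLt
      simp only [ne_eq, Fin.ext_iff, v2, v1] at h1' h2'
      omega
    have hsum : ∑ i ∈ Jᶜ, ℓ i = ℓ a + ℓ b := by rw [hJc, Finset.sum_pair hab]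
    have key : Jᶜ = {p4, p3} := by
      rw [hJc]
      by_contra hne
      have hcon : ∀ c d : Fin n, c ∈ J → d ∈ J → c ≠ d → c ≠ p1 → d ≠ p1 →
          ℓ a ≤ ℓ c → ℓ b ≤ ℓ d → False := by
        intro c d hc hd hcd hc1 hd1 hac hbd
        have := stmt6_aux hpos hc hd h1 hcd hc1 hd1
        have hp1pos := hpos p1
        rw [hsum] at hshort
        linarith
      by_cases h3J : p3 ∈ J
      · exact hcon p3 p2 h3J h2 h32 h31 h21
          (hmono a p3 (by omega) (by omega))
          (hmono b p2 (by omega) (by omega))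
      · have h3ab : p3 = a ∨ p3 = b := by
          have : p3 ∈ ({a, b} : Finset (Fin n)) := by
            rw [← hJc]; exact Finset.mem_compl.mpr h3J
          simpa using this
        have h4J : p4 ∈ J := by
          by_contra h4J
          have h4ab : p4 = a ∨ p4 = b := by
            have : p4 ∈ ({a, b} : Finset (Fin n)) := by
              rw [← hJc]; exact Finset.mem_compl.mpr h4J
            simpa using this
          apply hne
          rcases h4ab with rfl | rfl <;> rcases h3ab with rfl | rfl
          · exact absurd rfl h43
          · rfl
          · rw [Finset.pair_comm]
          · exact absurd rfl h43
        rcases h3ab with rfl | rfl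
        · have hb4 : b ≠ p4 := fun h => hb (h ▸ h4J)
          have hbv4 : (b : ℕ) ≤ n - 4 := by
            simp only [ne_eq, Fin.ext_iff, v4, v3] at hb4 hab
            omega
          exact hcon p2 p4 h2 h4J (Ne.symm h42) h21 h41
            (hmono p3 p2 (by omega) (by omega))
            (hmono b p4 (by omega) (by omega))
        · have ha4 : a ≠ p4 := fun h => ha (h ▸ h4J)
          have hav4 : (a : ℕ) ≤ n - 4 := by
            simp only [ne_eq, Fin.ext_iff, v4, v3] at ha4 hab
            omega
          exact hcon p4 p2 h4J h2 h42 h41 h21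
            (hmono a p4 (by omega) (by omega))
            (hmono p3 p2 (by omega) (by omega))
    rw [← compl_compl J, key]
  · rintro rfl
    have hcardpair : ({p4, p3} : Finset (Fin n)).card = 2 := Finset.card_pair h43
    refine ⟨?_, ?_, ?_, ?_⟩
    · rw [Finset.card_compl, hcardpair, Fintype.card_fin]
    · simp only [Finset.mem_compl, Finset.mem_insert, Finset.mem_singleton]
      push_neg
      exact ⟨fun h => h42 h.symm, fun h => h32 h.symm⟩
    · simp only [Finset.mem_compl, Finset.mem_insert, Finset.mem_singleton]
      push_neg
      exact ⟨fun h => h41 h.symm, fun h => h31 h.symm⟩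
    · rw [compl_compl]
      have htot := Finset.sum_add_sum_compl ({p4, p3} : Finset (Fin n)) ℓ
      rw [Finset.sum_pair h43] at htot ⊢
      linarith

/-- For `n > 3` and ordered positive `ℓ`: if the set `{n-3, n-2}` (0-based
indices `n-4, n-3`) is long with respect to `ℓ`, then there is exactly one
`(n-2)`-element subset of `{1,…,n}` containing both `n-1` and `n` (0-based
indices `n-2`, `n-1`) that is short with respect to `ℓ`, namely the complement
of `{n-3, n-2}`; in particular `d_{n-3}(ℓ) = 1`. -/
theorem stmt6 (n : ℕ) (hn : 3 < n) (ℓ : Fin n → ℝ) (hpos : ∀ i, 0 < ℓ i)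
    (hmono : ∀ i j : Fin n, (i : ℕ) ≤ (j : ℕ) → (j : ℕ) < n - 1 → ℓ i ≤ ℓ j)
    (hlong : (1 / 2) * ∑ i, ℓ i < ℓ ⟨n - 4, by omega⟩ + ℓ ⟨n - 3, by omega⟩) :
    {J : Finset (Fin n) | J.card = n - 2 ∧ (⟨n - 2, by omega⟩ : Fin n) ∈ J ∧
        (⟨n - 1, by omega⟩ : Fin n) ∈ J ∧ ∑ i ∈ J, ℓ i < ∑ i ∈ Jᶜ, ℓ i}
      = {({⟨n - 4, by omega⟩, ⟨n - 3, by omega⟩} : Finset (Fin n))ᶜ} := by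
  exact stmt6_main hn ℓ hpos hmono _ _ _ _ rfl rfl rfl rfl hlong
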